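/- Fix 0 < m ≤ L < ∞, α > 0, β ≥ 0, 0 < ρ ≤ τ < 1, and λ ≥ 0. Define the real matrices Â = [[β+1, −β, 0], [1, 0, 0], [−L(β+1), βL, 0]] (3×3), B̂ = (−α, 0, 1)ᵀ (3×1), Ĉ = [[L(β+1), −Lβ, ρ²], [−m(β+1), mβ, 0]] (2×3), D̂ = (−1, 1)ᵀ (2×1), and M = [[0, 1], [1, 0]]. Suppose there exists a symmetric positive definite 3×3 matrix P such that [[ÂᵀPÂ − τ²P, ÂᵀPB̂], [B̂ᵀPÂ, B̂ᵀPB̂]] + λ[Ĉ D̂]ᵀ M [Ĉ D̂] ⪯ 0 (negative semidefinite), where [Ĉ D̂] is the 2×4 matrix obtained by appending the column D̂ to Ĉ. Then for every p ≥ 1, every f ∈ S_p(m, L), every x₀, x₁ ∈ ℝᵖ, letting (x_t) be the Nesterov iterates with parameters α, β and x* the fixed point of the iteration, one has ‖x_t − x*‖ ≤ √(κ_P) · √(‖x₁ − x*‖² + ‖x₀ − x*‖²) · τᵗ for all t ≥ 0, where κ_P = σ_max(P)/σ_min(P) is the ratio of the largest to smallest eigenvalue of P. -/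

import Mathlib

open RealInnerProductSpace

/-- `f ∈ S_p(m, L)`: `f` is differentiable and its gradient satisfies the strong
convexity / Lipschitz sector condition
`m‖x−y‖² ≤ ⟨∇f(x) − ∇f(y), x − y⟩ ≤ L‖x−y‖²`. -/
def MemS {p : ℕ} (m L : ℝ) (f : EuclideanSpace ℝ (Fin p) → ℝ) : Prop :=
  Differentiable ℝ f ∧
  ∀ x y : EuclideanSpace ℝ (Fin p),
    m * ‖x - y‖^2 ≤ ⟪gradient f x - gradient f y, x - y⟫ ∧
    ⟪gradient f x - gradient f y, x - y⟫ ≤ L * ‖x - y‖^2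

/-- `x : ℕ → ℝᵖ` is a trajectory of Nesterov's accelerated method with parameters
`α, β` applied to `f`: for all `t ≥ 1`, `y_t = (1+β)x_t − βx_{t−1}` and
`x_{t+1} = y_t − α∇f(y_t)`. The values `x 0` and `x 1` are the initial points. -/
def NAMIter {p : ℕ} (f : EuclideanSpace ℝ (Fin p) → ℝ) (α β : ℝ)
    (x : ℕ → EuclideanSpace ℝ (Fin p)) : Prop :=
  ∀ t : ℕ, 1 ≤ t →
    x (t+1) = ((1+β) • x t - β • x (t-1))
      - α • gradient f ((1+β) • x t - β • x (t-1))

open Matrix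

section AuxAnalysis

variable {F : Type*} [NormedAddCommGroup F] [InnerProductSpace ℝ F] [CompleteSpace F]

lemma aux_lineHasDerivAt (φ : F → ℝ) (hφ : Differentiable ℝ φ) (c d : F) (t : ℝ) :
    HasDerivAt (fun s : ℝ => φ (c + s • d)) ⟪gradient φ (c + t • d), d⟫ t := by
  have hline : HasDerivAt (fun s : ℝ => c + s • d) d t := by
    simpa using ((hasDerivAt_id t).smul_const d).const_add c
  have hg := ((hφ (c + t • d)).hasGradientAt).hasFDerivAt
  have := hg.comp_hasDerivAt t hline
  simpa [InnerProductSpace.toDual_apply_apply, Function.comp_def] using this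

omit [CompleteSpace F] in
/-- descent lemma along a segment -/
lemma aux_segment_upper (φ : F → ℝ) (G : F → F) (K : ℝ)
    (hG : ∀ c d t, HasDerivAt (fun s : ℝ => φ (c + s • d)) ⟪G (c + t • d), d⟫ t)
    (hsec : ∀ a b : F, ⟪G a - G b, a - b⟫ ≤ K * ‖a - b‖ ^ 2) (y z : F) :
    φ z ≤ φ y + ⟪G y, z - y⟫ + K / 2 * ‖z - y‖ ^ 2 := by
  set d := z - y with hd
  set g : ℝ → ℝ := fun s => φ (y + s • d) - s * ⟪G y, d⟫ - s ^ 2 * (K / 2 * ‖d‖ ^ 2) with hgdef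
  have hderiv : ∀ t : ℝ, HasDerivAt g
      (⟪G (y + t • d), d⟫ - ⟪G y, d⟫ - 2 * t * (K / 2 * ‖d‖ ^ 2)) t := by
    intro t
    have h1 := hG y d t
    have h2 : HasDerivAt (fun s : ℝ => s * ⟪G y, d⟫) ⟪G y, d⟫ t := by
      simpa using (hasDerivAt_id t).mul_const ⟪G y, d⟫
    have h3 : HasDerivAt (fun s : ℝ => s ^ 2 * (K / 2 * ‖d‖ ^ 2))
        (2 * t * (K / 2 * ‖d‖ ^ 2)) t := by
      have := (hasDerivAt_pow 2 t).mul_const (K / 2 * ‖d‖ ^ 2)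
      exact this.congr_deriv (by norm_num)
    exact (h1.sub h2).sub h3
  have hmono : AntitoneOn g (Set.Icc 0 1) := by
    apply antitoneOn_of_deriv_nonpos (convex_Icc 0 1)
    · exact (Differentiable.continuous fun t => (hderiv t).differentiableAt).continuousOn
    · intro t ht
      exact (hderiv t).differentiableAt.differentiableWithinAt
    · intro t ht
      rw [interior_Icc] at ht
      rw [(hderiv t).deriv]
      have hsect : ⟪G (y + t • d) - G y, t • d⟫ ≤ K * ‖t • d‖ ^ 2 := by
        simpa using hsec (y + t • d) y
      rw [inner_smul_right] at hsect
      have ht0 : 0 < t := ht.1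
      have : ⟪G (y + t • d), d⟫ - ⟪G y, d⟫ ≤ K * t * ‖d‖ ^ 2 := by
        rw [inner_sub_left] at hsect
        have hn : ‖t • d‖ ^ 2 = t ^ 2 * ‖d‖ ^ 2 := by
          rw [norm_smul, mul_pow, Real.norm_eq_abs, sq_abs]
        rw [hn] at hsect
        nlinarith
      nlinarith
  have h01 := hmono (Set.left_mem_Icc.2 zero_le_one) (Set.right_mem_Icc.2 zero_le_one) zero_le_one
  simp only [hgdef] at h01
  simp only [zero_smul, add_zero, one_smul, zero_mul, sub_zero, zero_pow, one_mul, one_pow] at h01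
  have : y + d = z := by rw [hd]; abel
  rw [this] at h01
  linarith

omit [CompleteSpace F] in
lemma aux_segment_lower (φ : F → ℝ) (G : F → F)
    (hG : ∀ c d t, HasDerivAt (fun s : ℝ => φ (c + s • d)) ⟪G (c + t • d), d⟫ t)
    (hmono : ∀ a b : F, 0 ≤ ⟪G a - G b, a - b⟫) (y z : F) :
    φ y + ⟪G y, z - y⟫ ≤ φ z := by
  set d := z - y with hd
  set g : ℝ → ℝ := fun s => φ (y + s • d) - s * ⟪G y, d⟫ with hgdef
  have hderiv : ∀ t : ℝ, HasDerivAt g (⟪G (y + t • d), d⟫ - ⟪G y, d⟫) t := by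
    intro t
    have h2 : HasDerivAt (fun s : ℝ => s * ⟪G y, d⟫) ⟪G y, d⟫ t := by
      simpa using (hasDerivAt_id t).mul_const ⟪G y, d⟫
    exact (hG y d t).sub h2
  have hmono' : MonotoneOn g (Set.Icc 0 1) := by
    apply monotoneOn_of_deriv_nonneg (convex_Icc 0 1)
    · exact (Differentiable.continuous fun t => (hderiv t).differentiableAt).continuousOn
    · intro t ht
      exact (hderiv t).differentiableAt.differentiableWithinAt
    · intro t ht
      rw [interior_Icc] at ht
      rw [(hderiv t).deriv]
      have hsect : 0 ≤ ⟪G (y + t • d) - G y, t • d⟫ := by simpa using hmono (y + t • d) y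
      rw [inner_smul_right, inner_sub_left] at hsect
      nlinarith [ht.1]
  have h01 := hmono' (Set.left_mem_Icc.2 zero_le_one) (Set.right_mem_Icc.2 zero_le_one) zero_le_one
  simp only [hgdef, zero_smul, add_zero, one_smul, zero_mul, sub_zero, one_mul] at h01
  have : y + d = z := by rw [hd]; abel
  rw [this] at h01
  linarith

omit [CompleteSpace F] in
/-- interpolation inequality for a convex function with `K`-Lipschitz-type gradient -/
lemma aux_interp (φ : F → ℝ) (G : F → F) (K : ℝ) (hK : 0 ≤ K)
    (hG : ∀ c d t, HasDerivAt (fun s : ℝ => φ (c + s • d)) ⟪G (c + t • d), d⟫ t)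
    (hmono : ∀ a b : F, 0 ≤ ⟪G a - G b, a - b⟫)
    (hsec : ∀ a b : F, ⟪G a - G b, a - b⟫ ≤ K * ‖a - b‖ ^ 2) (y z : F) :
    ‖G z - G y‖ ^ 2 ≤ 2 * K * (φ z - φ y - ⟪G y, z - y⟫) := by
  obtain ⟨ψ, hψ⟩ : ∃ ψ : F → ℝ, ψ = fun w => φ w - ⟪G y, w⟫ := ⟨_, rfl⟩
  obtain ⟨Gψ, hGψ⟩ : ∃ Gψ : F → F, Gψ = fun w => G w - G y := ⟨_, rfl⟩
  have hGψd : ∀ c d t, HasDerivAt (fun s : ℝ => ψ (c + s • d)) ⟪Gψ (c + t • d), d⟫ t := by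
    intro c d t
    have h2 : HasDerivAt (fun s : ℝ => ⟪G y, c + s • d⟫) ⟪G y, d⟫ t := by
      have : (fun s : ℝ => ⟪G y, c + s • d⟫) = fun s : ℝ => ⟪G y, c⟫ + s * ⟪G y, d⟫ := by
        funext s; rw [inner_add_right, real_inner_smul_right]
      rw [this]
      simpa using ((hasDerivAt_id t).mul_const ⟪G y, d⟫).const_add ⟪G y, c⟫
    have := (hG c d t).sub h2
    rw [hψ, hGψ]; simp only [inner_sub_left]; exact this
  have hGψmono : ∀ a b : F, 0 ≤ ⟪Gψ a - Gψ b, a - b⟫ := by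
    intro a b; simpa [hGψ] using hmono a b
  have hGψsec : ∀ a b : F, ⟪Gψ a - Gψ b, a - b⟫ ≤ K * ‖a - b‖ ^ 2 := by
    intro a b; simpa [hGψ] using hsec a b
  obtain ⟨Δ, hΔ⟩ : ∃ Δ, Δ = G z - G y := ⟨_, rfl⟩
  obtain ⟨R, hR⟩ : ∃ R, R = φ z - φ y - ⟪G y, z - y⟫ := ⟨_, rfl⟩
  rw [← hΔ, ← hR]
  have hR0 : 0 ≤ R := by
    have := aux_segment_lower φ G hG hmono y z
    rw [hR]; linarith
  have key : ∀ t : ℝ, t * ‖Δ‖ ^ 2 - K / 2 * t ^ 2 * ‖Δ‖ ^ 2 ≤ R := by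
    intro t
    have h1 : ψ y ≤ ψ (z - t • Δ) := by
      have := aux_segment_lower ψ Gψ hGψd hGψmono y (z - t • Δ)
      have hGψy : Gψ y = 0 := by simp [hGψ]
      rw [hGψy] at this
      simpa using this
    have h2 : ψ (z - t • Δ) ≤ ψ z + ⟪Gψ z, (z - t • Δ) - z⟫ + K / 2 * ‖(z - t • Δ) - z‖ ^ 2 :=
      aux_segment_upper ψ Gψ K hGψd hGψsec z (z - t • Δ)
    have h3 : ((z - t • Δ) - z) = -(t • Δ) := by abel
    rw [h3] at h2
    have h4 : ⟪Gψ z, -(t • Δ)⟫ = -(t * ‖Δ‖ ^ 2) := by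
      rw [inner_neg_right, real_inner_smul_right]
      have : Gψ z = Δ := by rw [hGψ, hΔ]
      rw [this, real_inner_self_eq_norm_sq]
    have h5 : ‖-(t • Δ)‖ ^ 2 = t ^ 2 * ‖Δ‖ ^ 2 := by
      rw [norm_neg, norm_smul, mul_pow, Real.norm_eq_abs, sq_abs]
    rw [h4, h5] at h2
    have h6 : ψ z - ψ y = R := by
      rw [hψ, hR]; simp only []; rw [inner_sub_right]; ring
    linarith [h1, h2, h6]
  rcases eq_or_lt_of_le hK with hK0 | hKpos
  · have hΔ0 : ‖Δ‖ ^ 2 ≤ 0 := by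
      by_contra hpos
      push_neg at hpos
      have := key ((R + 1) / ‖Δ‖ ^ 2)
      rw [← hK0] at this
      simp only [zero_div, zero_mul, sub_zero] at this
      rw [div_mul_cancel₀ _ hpos.ne'] at this
      nlinarith
    nlinarith [sq_nonneg ‖Δ‖]
  · have hkey := key (1 / K)
    have heq : (1/K) * ‖Δ‖^2 - K/2 * (1/K)^2 * ‖Δ‖^2 = ‖Δ‖^2/(2*K) := by
      field_simp; ring
    rw [heq] at hkey
    have := (div_le_iff₀ (by positivity : (0:ℝ) < 2*K)).1 hkey
    linarith

end AuxAnalysis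

section AuxSum

/-- swap a triple sum -/
lemma aux_swap_sum {p : ℕ} (F : Fin 3 → Fin 3 → Fin p → ℝ) :
    ∑ i, ∑ j, ∑ k, F i j k = ∑ k, ∑ i, ∑ j, F i j k :=
  calc ∑ i, ∑ j, ∑ k, F i j k
      = ∑ i, ∑ k, ∑ j, F i j k :=
        Finset.sum_congr rfl fun i _ => Finset.sum_comm
    _ = ∑ k, ∑ i, ∑ j, F i j k := Finset.sum_comm

/-- The Lyapunov quadratic form associated to `P`. -/
noncomputable def lessardQ {p : ℕ} (P : Matrix (Fin 3) (Fin 3) ℝ)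
    (w : Fin 3 → EuclideanSpace ℝ (Fin p)) : ℝ :=
  ∑ i, ∑ j, P i j * ⟪w i, w j⟫

lemma lessardQ_coord {p : ℕ} (P : Matrix (Fin 3) (Fin 3) ℝ)
    (w : Fin 3 → EuclideanSpace ℝ (Fin p)) :
    lessardQ P w = ∑ k, ∑ i, ∑ j, P i j * (w i k * w j k) := by
  unfold lessardQ
  simp_rw [PiLp.inner_apply, RCLike.inner_apply, conj_trivial, Finset.mul_sum]
  refine (aux_swap_sum _).trans ?_
  exact Finset.sum_congr rfl fun _ _ => Finset.sum_congr rfl fun _ _ =>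
    Finset.sum_congr rfl fun _ _ => by ring

lemma aux_inner_coord {p : ℕ} (a b : EuclideanSpace ℝ (Fin p)) :
    ⟪a, b⟫ = ∑ k, a k * b k := by
  simp [PiLp.inner_apply, RCLike.inner_apply, mul_comm]

lemma aux_norm_coord {p : ℕ} (a : EuclideanSpace ℝ (Fin p)) :
    ‖a‖ ^ 2 = ∑ k, a k * a k := by
  rw [← real_inner_self_eq_norm_sq, aux_inner_coord]

end AuxSum

section AuxSpectral

open Matrix in
/-- eigenvalue bounds on the quadratic form of a positive definite real matrix -/
lemma aux_quad_bounds (P : Matrix (Fin 3) (Fin 3) ℝ) (hP : P.PosDef) (w : Fin 3 → ℝ) :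
    (⨅ i, hP.1.eigenvalues i) * (∑ i, w i * w i) ≤ ∑ i, ∑ j, P i j * (w i * w j) ∧
    ∑ i, ∑ j, P i j * (w i * w j) ≤ (⨆ i, hP.1.eigenvalues i) * (∑ i, w i * w i) := by
  have hH := hP.1
  set ev : Fin 3 → ℝ := hH.eigenvalues with hev
  set U : Matrix (Fin 3) (Fin 3) ℝ := ↑(hH.eigenvectorUnitary) with hUdef
  have hspec : P = U * diagonal (RCLike.ofReal ∘ ev) * star U := hH.spectral_theorem
  set s : Fin 3 → ℝ := w ᵥ* U with hs
  have hstarU : star U *ᵥ w = s := by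
    rw [hs]; ext i
    simp [Matrix.mulVec, Matrix.vecMul, dotProduct, Matrix.star_apply, mul_comm]
  have hU1 : U * star U = 1 := Matrix.mem_unitaryGroup_iff.mp hH.eigenvectorUnitary.prop
  have hqs : ∑ i, ∑ j, P i j * (w i * w j) = ∑ i, ev i * (s i * s i) := by
    have h1 : ∑ i, ∑ j, P i j * (w i * w j) = w ⬝ᵥ P *ᵥ w := by
      simp only [dotProduct, Matrix.mulVec, Finset.mul_sum]
      refine Finset.sum_congr rfl fun i _ => Finset.sum_congr rfl fun j _ => by ring
    rw [h1]
    conv_lhs => rw [hspec]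
    rw [← Matrix.mulVec_mulVec, ← Matrix.mulVec_mulVec, Matrix.dotProduct_mulVec w U _, hstarU]
    simp only [Matrix.mulVec_diagonal, dotProduct, Function.comp_apply,
      RCLike.ofReal_real_eq_id, id_eq]
    exact Finset.sum_congr rfl fun i _ => by ring
  have hns : ∑ i, w i * w i = ∑ i, s i * s i := by
    have h2 : ∑ i, s i * s i = s ⬝ᵥ s := by simp [dotProduct]
    have h3 : ∑ i, w i * w i = w ⬝ᵥ w := by simp [dotProduct]
    rw [h2, h3]
    conv_rhs => rw [hs]
    rw [← Matrix.dotProduct_mulVec, ← hs, ← hstarU, Matrix.mulVec_mulVec, hU1, Matrix.one_mulVec]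
  have hmin : ∀ i, (⨅ i, ev i) ≤ ev i := fun i => ciInf_le (Set.Finite.bddBelow (Set.finite_range ev)) i
  have hmax : ∀ i, ev i ≤ (⨆ i, ev i) := fun i => le_ciSup (Set.Finite.bddAbove (Set.finite_range ev)) i
  constructor
  · rw [hqs, hns, Finset.mul_sum]
    exact Finset.sum_le_sum fun i _ => mul_le_mul_of_nonneg_right (hmin i) (mul_self_nonneg _)
  · rw [hqs, hns, Finset.mul_sum]
    exact Finset.sum_le_sum fun i _ => mul_le_mul_of_nonneg_right (hmax i) (mul_self_nonneg _)

end AuxSpectral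

set_option maxHeartbeats 2000000 in
/-- Theorem 1 (Lessard et al.) specialized to Nesterov's method: if the IQC linear
matrix inequality has a positive definite solution `P`, then Nesterov's method
converges linearly with rate `τ` and constant `√(κ_P)`, where
`κ_P = σ_max(P)/σ_min(P)`. -/
theorem stmt13 (m L α β ρ τ lam : ℝ)
    (hm : 0 < m) (hmL : m ≤ L) (hα : 0 < α) (hβ : 0 ≤ β)
    (hρ : 0 < ρ) (hρτ : ρ ≤ τ) (hτ : τ < 1) (hlam : 0 ≤ lam)
    (Ahat : Matrix (Fin 3) (Fin 3) ℝ) (Bhat : Matrix (Fin 3) (Fin 1) ℝ)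
    (CDhat : Matrix (Fin 2) (Fin 4) ℝ) (Mmat : Matrix (Fin 2) (Fin 2) ℝ)
    (hA : Ahat = !![β+1, -β, 0; 1, 0, 0; -L*(β+1), β*L, 0])
    (hB : Bhat = !![-α; 0; 1])
    (hCD : CDhat = !![L*(β+1), -L*β, ρ^2, -1; -m*(β+1), m*β, 0, 1])
    (hM : Mmat = !![0, 1; 1, 0])
    (P : Matrix (Fin 3) (Fin 3) ℝ) (hP : P.PosDef)
    (hLMI : (-((Matrix.reindex finSumFinEquiv finSumFinEquiv
        (Matrix.fromBlocks (Ahatᵀ * P * Ahat - τ^2 • P) (Ahatᵀ * P * Bhat)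
          (Bhatᵀ * P * Ahat) (Bhatᵀ * P * Bhat)))
        + lam • (CDhatᵀ * Mmat * CDhat))).PosSemidef) :
    ∀ (p : ℕ), 1 ≤ p →
    ∀ f : EuclideanSpace ℝ (Fin p) → ℝ, MemS m L f →
    ∀ x : ℕ → EuclideanSpace ℝ (Fin p), NAMIter f α β x →
    ∀ xstar : EuclideanSpace ℝ (Fin p), xstar - α • gradient f xstar = xstar →
    ∀ t : ℕ,
      ‖x t - xstar‖ ≤
        Real.sqrt ((⨆ i, hP.1.eigenvalues i) / (⨅ i, hP.1.eigenvalues i)) *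
          Real.sqrt (‖x 1 - xstar‖^2 + ‖x 0 - xstar‖^2) * τ^t := by
  subst hA hB hCD hM
  have hτ0 : 0 < τ := lt_of_lt_of_le hρ hρτ
  have hτ2 : 0 < τ ^ 2 := by positivity
  have hρ2τ2 : ρ ^ 2 ≤ τ ^ 2 := by nlinarith
  have hρ2le1 : ρ ^ 2 ≤ 1 := by nlinarith
  have hLm : (0:ℝ) ≤ L - m := by linarith
  -- the scalar consequence of the LMI
  have hscalar : ∀ a b c u : ℝ,
      (∑ i, ∑ j, P i j * ((![(β+1)*a-β*b-α*u, a, -(L*(β+1))*a+β*L*b+u] i) *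
        (![(β+1)*a-β*b-α*u, a, -(L*(β+1))*a+β*L*b+u] j)))
        + lam * (2 * ((L*(β+1)*a - L*β*b + ρ^2*c - u) * (-(m*(β+1))*a + m*β*b + u)))
      ≤ τ^2 * (∑ i, ∑ j, P i j * ((![a,b,c] i) * (![a,b,c] j))) := by
    intro a b c u
    have h := hLMI.dotProduct_mulVec_nonneg ![a,b,c,u]
    have e0 : (@finSumFinEquiv 3 1).symm (0 : Fin 4) = Sum.inl (0 : Fin 3) := by decide
    have e1 : (@finSumFinEquiv 3 1).symm (1 : Fin 4) = Sum.inl (1 : Fin 3) := by decide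
    have e2 : (@finSumFinEquiv 3 1).symm (2 : Fin 4) = Sum.inl (2 : Fin 3) := by decide
    have e3c : (@finSumFinEquiv 3 1).symm (Fin.succ 2) = Sum.inr (0 : Fin 1) := by decide
    have e3 : (@finSumFinEquiv 3 1).symm (3 : Fin 4) = Sum.inr (0 : Fin 1) := by decide
    have e2b : (@finSumFinEquiv 3 1).symm (Fin.succ 1) = Sum.inl (2 : Fin 3) := by decide
    have e3b : (@finSumFinEquiv 3 1).symm ((Fin.succ 1).succ) = Sum.inr (0 : Fin 1) := by decide
    simp only [Matrix.reindex_apply, Matrix.submatrix_apply, Matrix.neg_apply,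
      Matrix.add_apply, Matrix.smul_apply, Matrix.mul_apply, Matrix.sub_apply,
      Matrix.transpose_apply, dotProduct, Matrix.mulVec,
      Fin.sum_univ_succ, Fin.sum_univ_zero, star_trivial,
      e0, e1, e2, e3, Fin.isValue, Matrix.of_apply, Matrix.fromBlocks_apply₁₁,
      Matrix.fromBlocks_apply₁₂, Matrix.fromBlocks_apply₂₁, Matrix.fromBlocks_apply₂₂,
      Matrix.cons_val', Matrix.cons_val_zero, Matrix.cons_val_one, Matrix.head_cons,
      Matrix.empty_val', Matrix.cons_val_fin_one, Matrix.head_fin_const, smul_eq_mul,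
      Fin.succ_zero_eq_one, Fin.succ_one_eq_two, Matrix.cons_val_succ,
      Matrix.cons_val_two, Matrix.cons_val_three, Matrix.tail_cons, e2b, e3b, e3c] at h ⊢
    ring_nf at h ⊢
    linarith [h]
  intro p hp f hf x hx xstar hstar t
  -- the gradient vanishes at the fixed point
  have hgrad0 : gradient f xstar = 0 := by
    have h1 : α • gradient f xstar = 0 := by
      have h2 := hstar
      rw [sub_eq_self] at h2
      exact h2
    rcases smul_eq_zero.mp h1 with h | h
    · exact absurd h (ne_of_gt hα)
    · exact h
  -- the vector-valued consequence of the LMI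
  have happ : ∀ (A B C : EuclideanSpace ℝ (Fin p)) (i : Fin 3) (k : Fin p),
      (![A, B, C] i) k = ![A k, B k, C k] i := by
    intro A B C i k; fin_cases i <;> rfl
  have hkeyA : ∀ a b c u : EuclideanSpace ℝ (Fin p),
      lessardQ P ![(β+1) • a - β • b - α • u, a, (-(L*(β+1))) • a + (β*L) • b + u]
        + lam * (2 * ⟪(L*(β+1)) • a - (L*β) • b + (ρ^2) • c - u,
            (-(m*(β+1))) • a + (m*β) • b + u⟫)
      ≤ τ^2 * lessardQ P ![a, b, c] := by
    intro a b c u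
    rw [lessardQ_coord, lessardQ_coord, aux_inner_coord]
    simp only [Finset.mul_sum]
    rw [← Finset.sum_add_distrib]
    refine Finset.sum_le_sum fun k _ => ?_
    have hs := hscalar (a k) (b k) (c k) (u k)
    simp only [Fin.sum_univ_three, Matrix.cons_val_zero, Matrix.cons_val_one, Matrix.head_cons,
      Matrix.cons_val_two, Matrix.tail_cons] at hs
    simp only [happ, Fin.sum_univ_three, Matrix.cons_val_zero, Matrix.cons_val_one,
      Matrix.head_cons, Matrix.cons_val_two, Matrix.tail_cons,
      PiLp.smul_apply, PiLp.sub_apply, PiLp.add_apply, PiLp.neg_apply, smul_eq_mul]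
    ring_nf at hs ⊢
    linarith [hs]
  -- the auxiliary function h and its gradient v
  obtain ⟨vfun, hvfun⟩ : ∃ v : EuclideanSpace ℝ (Fin p) → EuclideanSpace ℝ (Fin p),
      v = fun w => gradient f w - m • (w - xstar) := ⟨_, rfl⟩
  obtain ⟨hfun, hhfun⟩ : ∃ h : EuclideanSpace ℝ (Fin p) → ℝ,
      h = fun w => f w - m / 2 * ‖w - xstar‖ ^ 2 := ⟨_, rfl⟩
  have hlineh : ∀ c d t, HasDerivAt (fun s : ℝ => hfun (c + s • d)) ⟪vfun (c + t • d), d⟫ t := by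
    intro c d t
    have h1 := aux_lineHasDerivAt f hf.1 c d t
    have hl : HasDerivAt (fun s : ℝ => (c - xstar) + s • d) d t := by
      simpa using ((hasDerivAt_id t).smul_const d).const_add (c - xstar)
    have hIP : HasDerivAt (fun s : ℝ => ⟪(c - xstar) + s • d, (c - xstar) + s • d⟫)
        (⟪(c - xstar) + t • d, d⟫ + ⟪d, (c - xstar) + t • d⟫) t :=
      HasDerivAt.inner ℝ hl hl
    have h2 : HasDerivAt (fun s : ℝ => m / 2 * ‖(c + s • d) - xstar‖ ^ 2)
        (m * ⟪(c + t • d) - xstar, d⟫) t := by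
      have hw : ∀ s : ℝ, (c + s • d) - xstar = (c - xstar) + s • d := by intro s; abel
      have : (fun s : ℝ => m / 2 * ‖(c + s • d) - xstar‖ ^ 2)
          = fun s : ℝ => m / 2 * ⟪(c - xstar) + s • d, (c - xstar) + s • d⟫ := by
        funext s; rw [hw s, real_inner_self_eq_norm_sq]
      rw [this]
      have heq : m / 2 * (⟪(c - xstar) + t • d, d⟫ + ⟪d, (c - xstar) + t • d⟫)
          = m * ⟪(c + t • d) - xstar, d⟫ := by
        rw [hw t, real_inner_comm d ((c - xstar) + t • d)]; ring
      have h2' := hIP.const_mul (m / 2)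
      rw [← heq]; exact h2'
    have := h1.sub h2
    have e : ⟪vfun (c + t • d), d⟫ = ⟪gradient f (c + t • d), d⟫ - m * ⟪c + t • d - xstar, d⟫ := by
      simp only [hvfun, inner_sub_left, real_inner_smul_left]
    rw [e, hhfun]; exact this
  have hsector : ∀ a b : EuclideanSpace ℝ (Fin p),
      0 ≤ ⟪vfun a - vfun b, a - b⟫ ∧ ⟪vfun a - vfun b, a - b⟫ ≤ (L - m) * ‖a - b‖ ^ 2 := by
    intro a b
    have hk := hf.2 a b
    have hexp : vfun a - vfun b = (gradient f a - gradient f b) - m • (a - b) := by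
      rw [hvfun]; simp only []; module
    rw [hexp, inner_sub_left, real_inner_smul_left, real_inner_self_eq_norm_sq]
    constructor
    · linarith [hk.1]
    · linarith [hk.2]
  have hinterp := aux_interp hfun vfun (L - m) hLm hlineh
    (fun a b => (hsector a b).1) (fun a b => (hsector a b).2)
  -- trajectory quantities
  obtain ⟨Y, hY⟩ : ∃ Y : ℕ → EuclideanSpace ℝ (Fin p),
      Y = fun k => if k = 0 then xstar else (1+β) • x k - β • x (k-1) := ⟨_, rfl⟩
  obtain ⟨vv, hvv⟩ : ∃ vv : ℕ → EuclideanSpace ℝ (Fin p),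
      vv = fun k => vfun (Y k) := ⟨_, rfl⟩
  obtain ⟨qq, hqq⟩ : ∃ qq : ℕ → EuclideanSpace ℝ (Fin p),
      qq = fun k => (L - m) • (Y k - xstar) - vv k := ⟨_, rfl⟩
  obtain ⟨WW, hWW⟩ : ∃ WW : ℕ → ℝ,
      WW = fun k => (L - m) * (hfun (Y k) - hfun xstar) - 1/2 * ‖vv k‖ ^ 2 := ⟨_, rfl⟩
  have hvv' : ∀ k, vv k = vfun (Y k) := fun k => by rw [hvv]
  have hY0 : Y 0 = xstar := by rw [hY]; simp
  have hYsucc : ∀ k : ℕ, Y (k+1) = (1+β) • x (k+1) - β • x k := by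
    intro k; rw [hY]; simp
  have hvstar : vfun xstar = 0 := by
    rw [hvfun]; simp [hgrad0]
  have hvv0 : vv 0 = 0 := by rw [hvv', hY0, hvstar]
  have hqq0 : qq 0 = 0 := by
    simp only [hqq]; rw [hY0, hvv0]; simp
  have hWW0 : WW 0 = 0 := by
    simp only [hWW]; rw [hY0, hvv0]; simp
  have hippa : ∀ k l : ℕ, ⟪vv k, qq l⟫ = (L - m) * ⟪vv k, Y l - xstar⟫ - ⟪vv k, vv l⟫ := by
    intro k l
    simp only [hqq]
    rw [inner_sub_right, real_inner_smul_right]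
  have hWpos : ∀ k, 0 ≤ WW k := by
    intro k
    have h := hinterp xstar (Y k)
    rw [hvstar] at h
    simp only [zero_sub, norm_neg, inner_zero_left, sub_zero] at h
    rw [← hvv' k] at h
    simp only [hWW]
    nlinarith [h]
  have hQW : ∀ k, WW k ≤ ⟪vv k, qq k⟫ := by
    intro k
    have h := hinterp (Y k) xstar
    rw [hvstar, ← hvv' k] at h
    simp only [zero_sub, norm_neg] at h
    have hxY : ⟪vv k, xstar - Y k⟫ = -⟪vv k, Y k - xstar⟫ := by
      rw [show xstar - Y k = -(Y k - xstar) by abel, inner_neg_right]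
    rw [hxY] at h
    rw [hippa k k, real_inner_self_eq_norm_sq]
    simp only [hWW]
    nlinarith [h]
  have hQWcross : ∀ k l : ℕ, ⟪vv k, qq l⟫ ≤ ⟪vv k, qq k⟫ + WW l - WW k := by
    intro k l
    have h := hinterp (Y k) (Y l)
    rw [← hvv' k, ← hvv' l] at h
    rw [show Y l - Y k = (Y l - xstar) - (Y k - xstar) by abel, inner_sub_right] at h
    rw [norm_sub_sq_real] at h
    rw [hippa k l, hippa k k, real_inner_self_eq_norm_sq]
    rw [real_inner_comm (vv k) (vv l)] at h
    simp only [hWW]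
    nlinarith [h]
  -- the IQC terms and the Lyapunov function
  obtain ⟨ee, hee⟩ : ∃ ee : ℕ → ℝ,
      ee = fun k => ⟪qq (k+1) - (ρ^2) • qq k, vv (k+1)⟫ := ⟨_, rfl⟩
  obtain ⟨VV, hVV⟩ : ∃ VV : ℕ → ℝ,
      VV = fun s => lessardQ P ![x (s+1) - xstar, x s - xstar, -(qq s)] := ⟨_, rfl⟩
  have hee_lb : ∀ k, WW (k+1) - ρ^2 * WW k ≤ ee k := by
    intro k
    have h1 := hQW (k+1)
    have h2 := hQWcross (k+1) k
    have hsplit : ee k = ⟪vv (k+1), qq (k+1)⟫ - ρ^2 * ⟪vv (k+1), qq k⟫ := by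
      simp only [hee]
      rw [inner_sub_left, real_inner_smul_left]
      rw [real_inner_comm (qq (k+1)) (vv (k+1)), real_inner_comm (qq k) (vv (k+1))]
    have hint1 := mul_le_mul_of_nonneg_left h2 (sq_nonneg ρ)
    have hint2 := mul_le_mul_of_nonneg_left h1 (by linarith : (0:ℝ) ≤ 1 - ρ^2)
    nlinarith [hsplit, hint1, hint2]
  have hdecrease : ∀ s : ℕ, VV (s+1) + lam * (2 * ee s) ≤ τ^2 * VV s := by
    intro s
    have hxs := hx (s+1) (Nat.le_add_left 1 s)
    simp only [Nat.add_sub_cancel] at hxs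
    have hYs : Y (s+1) = (1+β) • x (s+1) - β • x s := hYsucc s
    have idA : (β+1) • (x (s+1) - xstar) - β • (x s - xstar)
        - α • (gradient f (Y (s+1))) = x (s+1+1) - xstar := by
      rw [hYs, hxs]
      module
    have idC : (-(L*(β+1))) • (x (s+1) - xstar) + (β*L) • (x s - xstar)
        + gradient f (Y (s+1)) = -(qq (s+1)) := by
      simp only [hqq, hvv, hvfun, hYs]
      module
    have idZ0 : (L*(β+1)) • (x (s+1) - xstar) - (L*β) • (x s - xstar)
        + (ρ^2) • (-(qq s)) - gradient f (Y (s+1)) = qq (s+1) - (ρ^2) • qq s := by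
      simp only [hqq, hvv, hvfun]
      rw [hYs]
      module
    have idZ1 : (-(m*(β+1))) • (x (s+1) - xstar) + (m*β) • (x s - xstar)
        + gradient f (Y (s+1)) = vv (s+1) := by
      simp only [hvv, hvfun, hYs]
      module
    have hk := hkeyA (x (s+1) - xstar) (x s - xstar) (-(qq s)) (gradient f (Y (s+1)))
    rw [idA, idC, idZ0, idZ1] at hk
    simp only [hVV, hee]
    exact hk
  have hinv : ∀ s : ℕ, VV s + lam * (2 * WW s) ≤ τ^(2*s) * VV 0 := by
    intro s
    induction s with
    | zero => rw [hWW0]; simp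
    | succ n IH =>
      have h1 := hdecrease n
      have h2 := hee_lb n
      have h3 := hWpos n
      have hA := mul_le_mul_of_nonneg_left h2 hlam
      have hB := mul_le_mul_of_nonneg_left
        (mul_le_mul_of_nonneg_right hρ2τ2 h3) hlam
      have hC := mul_le_mul_of_nonneg_left IH (le_of_lt hτ2)
      have hpow : τ^(2*(n+1)) = τ^2 * τ^(2*n) := by ring
      rw [hpow]
      nlinarith [h1, hA, hB, hC]
  -- spectral bounds
  obtain ⟨i0, hi0⟩ := Finite.exists_min hP.1.eigenvalues
  have hσminpos : 0 < ⨅ i, hP.1.eigenvalues i :=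
    lt_of_lt_of_le (hP.eigenvalues_pos i0) (le_ciInf hi0)
  have hσmaxpos : 0 < ⨆ i, hP.1.eigenvalues i :=
    lt_of_lt_of_le (hP.eigenvalues_pos i0)
      (le_ciSup (Set.Finite.bddAbove (Set.finite_range _)) i0)
  obtain ⟨smin, hsmin⟩ : ∃ smin, smin = ⨅ i, hP.1.eigenvalues i := ⟨_, rfl⟩
  obtain ⟨smax, hsmax⟩ : ∃ smax, smax = ⨆ i, hP.1.eigenvalues i := ⟨_, rfl⟩
  rw [← hsmin] at hσminpos
  rw [← hsmax] at hσmaxpos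
  -- lower bound on VV
  have hlow : ∀ s : ℕ, smin * ‖x s - xstar‖ ^ 2 ≤ VV s := by
    intro s
    simp only [hVV]
    rw [lessardQ_coord, aux_norm_coord, Finset.mul_sum]
    refine Finset.sum_le_sum fun k _ => ?_
    have hb := (aux_quad_bounds P hP (fun i => (![x (s+1) - xstar, x s - xstar, -(qq s)] i) k)).1
    rw [← hsmin] at hb
    simp only [Fin.sum_univ_three, Matrix.cons_val_zero, Matrix.cons_val_one, Matrix.head_cons,
      Matrix.cons_val_two, Matrix.tail_cons] at hb ⊢
    nlinarith [hb, mul_self_nonneg ((x (s+1) - xstar) k), mul_self_nonneg ((-(qq s)) k),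
      hσminpos.le]
  -- upper bound on VV 0
  have hup : VV 0 ≤ smax * (‖x 1 - xstar‖ ^ 2 + ‖x 0 - xstar‖ ^ 2) := by
    simp only [hVV]
    rw [hqq0, neg_zero, lessardQ_coord, aux_norm_coord, aux_norm_coord]
    rw [← Finset.sum_add_distrib, Finset.mul_sum]
    refine Finset.sum_le_sum fun k _ => ?_
    have hb := (aux_quad_bounds P hP (fun i => (![x 1 - xstar, x 0 - xstar,
        (0 : EuclideanSpace ℝ (Fin p))] i) k)).2
    rw [← hsmax] at hb
    have hz : (0 : EuclideanSpace ℝ (Fin p)) k = 0 := rfl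
    simp only [Fin.sum_univ_three, Matrix.cons_val_zero, Matrix.cons_val_one, Matrix.head_cons,
      Matrix.cons_val_two, Matrix.tail_cons, hz, zero_add] at hb ⊢
    nlinarith [hb]
  -- put everything together
  have hWt := hWpos t
  have hVt := hinv t
  have hlowt := hlow t
  have hS : (0:ℝ) ≤ ‖x 1 - xstar‖ ^ 2 + ‖x 0 - xstar‖ ^ 2 := by positivity
  have hτt : (0:ℝ) < τ^(2*t) := by positivity
  have hchain : smin * ‖x t - xstar‖ ^ 2 ≤
      τ^(2*t) * (smax * (‖x 1 - xstar‖ ^ 2 + ‖x 0 - xstar‖ ^ 2)) := by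
    have h4 := mul_le_mul_of_nonneg_left hup hτt.le
    nlinarith [hlowt, hVt, hWt, mul_nonneg hlam (mul_nonneg (by norm_num : (0:ℝ) ≤ 2) hWt)]
  have hfinal : ‖x t - xstar‖ ^ 2 ≤
      (smax / smin) * (‖x 1 - xstar‖ ^ 2 + ‖x 0 - xstar‖ ^ 2) * (τ^t)^2 := by
    rw [div_mul_eq_mul_div, div_mul_eq_mul_div, le_div_iff₀ hσminpos]
    have hps : (τ^t)^2 = τ^(2*t) := by ring
    rw [hps]
    nlinarith [hchain]
  rw [← hsmin, ← hsmax]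
  calc ‖x t - xstar‖ = Real.sqrt (‖x t - xstar‖ ^ 2) := (Real.sqrt_sq (norm_nonneg _)).symm
    _ ≤ Real.sqrt ((smax / smin) * (‖x 1 - xstar‖ ^ 2 + ‖x 0 - xstar‖ ^ 2) * (τ^t)^2) :=
        Real.sqrt_le_sqrt hfinal
    _ = Real.sqrt (smax / smin) * Real.sqrt (‖x 1 - xstar‖ ^ 2 + ‖x 0 - xstar‖ ^ 2) * τ^t := by
        rw [Real.sqrt_mul (by positivity), Real.sqrt_mul (by positivity),
          Real.sqrt_sq (by positivity)]
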